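/- In the disc example, the matrix of Γ_z := −z τ_a(−A₀+z)⁻¹G₀ in the basis {e_k} is diagonal with [Γ_z]_{kk} = −z(k²+1)^{1/2} ∑_{m=1}^∞ ν²_{m|k|} / (λ²_{m|k|}(λ²_{m|k|}+z)). -/

import Mathlib

open Filter
open scoped ComplexConjugate Topology

local notation "⟪" x ", " y "⟫" => @inner ℂ _ _ x y

/-- in the rotation-invariant disc example, the matrix of
`Γ_z := -z τ_a (-A₀+z)⁻¹ G₀` in the orthonormal basis `{e_k}` of `H^{1/2}(S¹)`
is diagonal with
`[Γ_z]_{kk} = -z (k²+1)^{1/2} ∑_{m} ν²_{m|k|}/(λ²_{m|k|}(λ²_{m|k|}+z))`. -/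
theorem disc_Gamma_matrix_elements
    {H h : Type*}
    [NormedAddCommGroup H] [InnerProductSpace ℂ H] [CompleteSpace H]
    [NormedAddCommGroup h] [InnerProductSpace ℂ h] [CompleteSpace h]
    (D : Submodule ℂ H) (hDdense : Dense (D : Set H))
    (A : D →ₗ[ℂ] H)
    (hsym : ∀ x y : D, ⟪A x, (y : H)⟫ = ⟪(x : H), A y⟫)
    (ρA : Set ℂ) (h0ρ : (0 : ℂ) ∈ ρA)
    (hρconj : ∀ z ∈ ρA, (starRingEnd ℂ) z ∈ ρA)
    (R : ℂ → H →L[ℂ] H)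
    (hmem : ∀ z, z ∈ ρA → ∀ y : H, R z y ∈ D)
    (hres1 : ∀ z (hz : z ∈ ρA) (y : H), z • R z y - A ⟨R z y, hmem z hz y⟩ = y)
    (hres2 : ∀ z ∈ ρA, ∀ x : D, R z (z • (x : H) - A x) = (x : H))
    (τ : D →ₗ[ℂ] h) (C : ℝ)
    (hτ : ∀ x : D, ‖τ x‖ ≤ C * (‖(x : H)‖ + ‖A x‖))
    (G : ℂ → h →L[ℂ] H)
    (hG : ∀ z (hz : z ∈ ρA) (ζ : h) (y : H),
      ⟪G z ζ, y⟫ = ⟪ζ, τ ⟨R ((starRingEnd ℂ) z) y, hmem _ (hρconj z hz) y⟩⟫)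
    -- `Γ_z = -z τ_a (-A₀+z)⁻¹ G₀`:
    (Γ : ℂ → h →L[ℂ] h)
    (hΓ : ∀ z (hz : z ∈ ρA) (ζ : h),
      Γ z ζ = (-z) • τ ⟨R z (G 0 ζ), hmem z hz (G 0 ζ)⟩)
    -- the radial data of the disc example:
    (a : ℝ → ℝ) (u : ℕ → ℕ → ℝ → ℝ) (lamv : ℕ → ℕ → ℝ) (ν : ℕ → ℕ → ℝ)
    (hlam_pos : ∀ m k, 0 < lamv m k)
    (hν : ∀ m k, Tendsto (fun r => a r * deriv (u m k) r)
      (nhdsWithin 1 (Set.Iio 1)) (nhds (ν m k)))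
    -- the orthonormal eigenbasis `U_{mn}` of `L²(D)`:
    (U : ℕ → ℤ → H)
    (hUon : Orthonormal ℂ (fun p : ℕ × ℤ => U p.1 p.2))
    (hUtotal : ⊤ ≤ (Submodule.span ℂ (Set.range fun p : ℕ × ℤ => U p.1 p.2)).topologicalClosure)
    (hUmem : ∀ m n, U m n ∈ D)
    (hAU : ∀ (m : ℕ) (n : ℤ),
      A ⟨U m n, hUmem m n⟩ = (-((lamv m n.natAbs : ℂ) ^ 2)) • U m n)
    -- the orthonormal basis `e_k` of `H^{1/2}(S¹)`:
    (e : ℤ → h) (heon : Orthonormal ℂ e)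
    (hetotal : ⊤ ≤ (Submodule.span ℂ (Set.range e)).topologicalClosure)
    -- `τ_a U_{mn} = (n²+1)^{1/4} ν_{m|n|} e_n`:
    (hτU : ∀ (m : ℕ) (n : ℤ),
      τ ⟨U m n, hUmem m n⟩ =
        (((((n : ℝ) ^ 2 + 1) ^ ((1 : ℝ) / 4) * ν m n.natAbs : ℝ) : ℂ)) • e n) :
    ∀ z (hz : z ∈ ρA) (i k : ℤ),
      ⟪e i, Γ z (e k)⟫ =
        if i = k then
          (-z) * ((((k : ℝ) ^ 2 + 1) ^ ((1 : ℝ) / 2) : ℝ) : ℂ) *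
            ∑' m : ℕ, ((ν m k.natAbs : ℝ) : ℂ) ^ 2 /
              (((lamv m k.natAbs : ℂ) ^ 2) * ((lamv m k.natAbs : ℂ) ^ 2 + z))
        else 0 := by
  intro z hz i k
  have hee : ∀ a b : ℤ, ⟪e a, e b⟫ = if a = b then (1 : ℂ) else 0 :=
    orthonormal_iff_ite.mp heon
  have hUne : ∀ m n, U m n ≠ 0 := fun m n => hUon.ne_zero (m, n)
  have hLne : ∀ (m : ℕ) (n : ℤ), ((lamv m n.natAbs : ℂ) ^ 2) ≠ 0 := fun m n =>
    pow_ne_zero _ (by exact_mod_cast (hlam_pos m n.natAbs).ne')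
  -- resolvent on eigenvectors
  have hRU : ∀ w, w ∈ ρA → ∀ (m : ℕ) (n : ℤ),
      ((lamv m n.natAbs : ℂ) ^ 2 + w) ≠ 0 ∧
      R w (U m n) = ((lamv m n.natAbs : ℂ) ^ 2 + w)⁻¹ • U m n := by
    intro w hw m n
    have h1 := hres2 w hw ⟨U m n, hUmem m n⟩
    rw [hAU m n] at h1
    have h2 : w • U m n - (-((lamv m n.natAbs : ℂ) ^ 2)) • U m n
        = ((lamv m n.natAbs : ℂ) ^ 2 + w) • U m n := by
      rw [neg_smul, sub_neg_eq_add, add_smul, add_comm]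
    rw [show ((⟨U m n, hUmem m n⟩ : D) : H) = U m n from rfl, h2, map_smul] at h1
    have hne : ((lamv m n.natAbs : ℂ) ^ 2 + w) ≠ 0 := by
      intro h0
      rw [h0, zero_smul] at h1
      exact hUne m n h1.symm
    refine ⟨hne, ?_⟩
    calc R w (U m n)
        = ((lamv m n.natAbs : ℂ) ^ 2 + w)⁻¹ • (((lamv m n.natAbs : ℂ) ^ 2 + w) • R w (U m n)) := by
          rw [smul_smul, inv_mul_cancel₀ hne, one_smul]
      _ = ((lamv m n.natAbs : ℂ) ^ 2 + w)⁻¹ • U m n := by rw [h1]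
  -- τ applied to resolvents of eigenvectors
  have hτR : ∀ (w : ℂ) (hw : w ∈ ρA) (m : ℕ) (n : ℤ) (hp : R w (U m n) ∈ D),
      τ ⟨R w (U m n), hp⟩ =
        (((lamv m n.natAbs : ℂ) ^ 2 + w)⁻¹ *
          (((((n : ℝ) ^ 2 + 1) ^ ((1 : ℝ) / 4) * ν m n.natAbs : ℝ) : ℂ))) • e n := by
    intro w hw m n hp
    have hsub : (⟨R w (U m n), hp⟩ : D)
        = ((lamv m n.natAbs : ℂ) ^ 2 + w)⁻¹ • ⟨U m n, hUmem m n⟩ :=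
      Subtype.ext (by simp [(hRU w hw m n).2])
    rw [hsub, map_smul, hτU, smul_smul]
  -- matrix elements of G against the eigenbasis
  have hGU : ∀ (w : ℂ) (hw : w ∈ ρA) (ζ : h) (m : ℕ) (n : ℤ),
      ⟪G w ζ, U m n⟫ =
        (((lamv m n.natAbs : ℂ) ^ 2 + (starRingEnd ℂ) w)⁻¹ *
          (((((n : ℝ) ^ 2 + 1) ^ ((1 : ℝ) / 4) * ν m n.natAbs : ℝ) : ℂ))) * ⟪ζ, e n⟫ := by
    intro w hw ζ m n
    rw [hG w hw ζ (U m n), hτR _ (hρconj w hw) m n _, inner_smul_right]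
  have hzρ' : (starRingEnd ℂ) z ∈ ρA := hρconj z hz
  have hx : ∀ (m : ℕ) (n : ℤ),
      ⟪G ((starRingEnd ℂ) z) (e i), U m n⟫ =
        (((lamv m n.natAbs : ℂ) ^ 2 + z)⁻¹ *
          (((((n : ℝ) ^ 2 + 1) ^ ((1 : ℝ) / 4) * ν m n.natAbs : ℝ) : ℂ))) * ⟪e i, e n⟫ := by
    intro m n
    rw [hGU _ hzρ' (e i) m n, Complex.conj_conj]
  have hy : ∀ (m : ℕ) (n : ℤ),
      ⟪U m n, G 0 (e k)⟫ =
        ((((lamv m n.natAbs : ℂ) ^ 2)⁻¹ *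
          (((((n : ℝ) ^ 2 + 1) ^ ((1 : ℝ) / 4) * ν m n.natAbs : ℝ) : ℂ))) * ⟪e n, e k⟫) := by
    intro m n
    rw [← inner_conj_symm, hGU 0 h0ρ (e k) m n]
    simp [map_mul, map_inv₀, map_pow, Complex.conj_ofReal, inner_conj_symm]
  -- Parseval
  have key : HasSum
      (fun p : ℕ × ℤ => ⟪G ((starRingEnd ℂ) z) (e i), U p.1 p.2⟫ * ⟪U p.1 p.2, G 0 (e k)⟫)
      ⟪G ((starRingEnd ℂ) z) (e i), G 0 (e k)⟫ := by
    have h3 := (HilbertBasis.mk hUon hUtotal).hasSum_inner_mul_inner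
      (G ((starRingEnd ℂ) z) (e i)) (G 0 (e k))
    have hb : ∀ p : ℕ × ℤ, (HilbertBasis.mk hUon hUtotal) p = U p.1 p.2 := fun p =>
      congrFun (HilbertBasis.coe_mk hUon hUtotal) p
    simp only [hb] at h3
    exact h3
  have key2 : HasSum
      (fun p : ℕ × ℤ =>
        ((((lamv p.1 p.2.natAbs : ℂ) ^ 2 + z)⁻¹ *
          (((((p.2 : ℝ) ^ 2 + 1) ^ ((1 : ℝ) / 4) * ν p.1 p.2.natAbs : ℝ) : ℂ))) * ⟪e i, e p.2⟫) *
        ((((lamv p.1 p.2.natAbs : ℂ) ^ 2)⁻¹ *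
          (((((p.2 : ℝ) ^ 2 + 1) ^ ((1 : ℝ) / 4) * ν p.1 p.2.natAbs : ℝ) : ℂ))) * ⟪e p.2, e k⟫))
      ⟪G ((starRingEnd ℂ) z) (e i), G 0 (e k)⟫ := by
    simpa only [hx, hy] using key
  -- the matrix element as an inner product of two G's
  have hmain : ⟪e i, Γ z (e k)⟫ = (-z) * ⟪G ((starRingEnd ℂ) z) (e i), G 0 (e k)⟫ := by
    have hsub : (⟨R ((starRingEnd ℂ) ((starRingEnd ℂ) z)) (G 0 (e k)),
        hmem _ (hρconj _ hzρ') (G 0 (e k))⟩ : D)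
        = ⟨R z (G 0 (e k)), hmem z hz (G 0 (e k))⟩ := Subtype.ext (by
          show R ((starRingEnd ℂ) ((starRingEnd ℂ) z)) (G 0 (e k)) = R z (G 0 (e k))
          rw [Complex.conj_conj])
    have h4 := congrArg τ hsub
    have h5 : ⟪G ((starRingEnd ℂ) z) (e i), G 0 (e k)⟫
        = ⟪e i, τ ⟨R z (G 0 (e k)), hmem z hz (G 0 (e k))⟩⟫ :=
      (hG ((starRingEnd ℂ) z) hzρ' (e i) (G 0 (e k))).trans
        (congrArg (fun t => (inner ℂ (e i) t : ℂ)) h4)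
    rw [hΓ z hz (e k), inner_smul_right]
    exact congrArg (fun t => -z * t) h5.symm
  by_cases hik : i = k
  · subst hik
    rw [if_pos rfl]
    -- restrict the sum to n = i
    set f : ℕ × ℤ → ℂ := fun p =>
        ((((lamv p.1 p.2.natAbs : ℂ) ^ 2 + z)⁻¹ *
          (((((p.2 : ℝ) ^ 2 + 1) ^ ((1 : ℝ) / 4) * ν p.1 p.2.natAbs : ℝ) : ℂ))) * ⟪e i, e p.2⟫) *
        ((((lamv p.1 p.2.natAbs : ℂ) ^ 2)⁻¹ *
          (((((p.2 : ℝ) ^ 2 + 1) ^ ((1 : ℝ) / 4) * ν p.1 p.2.natAbs : ℝ) : ℂ))) * ⟪e p.2, e i⟫)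
      with hf
    have hginj : Function.Injective (fun m : ℕ => ((m, i) : ℕ × ℤ)) := by
      intro a b hab
      exact (Prod.ext_iff.mp hab).1
    have hzero : ∀ p : ℕ × ℤ, p ∉ Set.range (fun m : ℕ => ((m, i) : ℕ × ℤ)) → f p = 0 := by
      intro p hp
      have hpne : p.2 ≠ i := by
        intro hpn
        exact hp ⟨p.1, by rw [← hpn]⟩
      rw [hf]
      simp only [hee]
      rw [if_neg (fun hh => hpne hh.symm)]
      ring
    have keyg : HasSum (fun m : ℕ => f (m, i)) ⟪G ((starRingEnd ℂ) z) (e i), G 0 (e i)⟫ :=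
      (hginj.hasSum_iff hzero).mpr key2
    have hq : ((((i : ℝ) ^ 2 + 1) ^ ((1 : ℝ) / 4)) : ℝ) ^ 2
        = (((i : ℝ) ^ 2 + 1) ^ ((1 : ℝ) / 2)) := by
      rw [← Real.rpow_natCast (((i : ℝ) ^ 2 + 1) ^ ((1 : ℝ) / 4)) 2,
        ← Real.rpow_mul (by positivity)]
      norm_num
    have hterm : ∀ m : ℕ, f (m, i) =
        ((((i : ℝ) ^ 2 + 1) ^ ((1 : ℝ) / 2) : ℝ) : ℂ) *
          (((ν m i.natAbs : ℝ) : ℂ) ^ 2 /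
            (((lamv m i.natAbs : ℂ) ^ 2) * ((lamv m i.natAbs : ℂ) ^ 2 + z))) := by
      intro m
      have h1 : ⟪e i, e i⟫ = (1 : ℂ) := by rw [hee, if_pos rfl]
      show ((((lamv m i.natAbs : ℂ) ^ 2 + z)⁻¹ *
          (((((i : ℝ) ^ 2 + 1) ^ ((1 : ℝ) / 4) * ν m i.natAbs : ℝ) : ℂ))) * ⟪e i, e i⟫) *
        ((((lamv m i.natAbs : ℂ) ^ 2)⁻¹ *
          (((((i : ℝ) ^ 2 + 1) ^ ((1 : ℝ) / 4) * ν m i.natAbs : ℝ) : ℂ))) * ⟪e i, e i⟫) = _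
      rw [h1, mul_one, mul_one,
        div_eq_mul_inv (((ν m i.natAbs : ℝ) : ℂ) ^ 2)
          (((lamv m i.natAbs : ℂ) ^ 2) * ((lamv m i.natAbs : ℂ) ^ 2 + z)),
        mul_inv_rev, Complex.ofReal_mul, ← hq, Complex.ofReal_pow]
      ring
    have htsum : ⟪G ((starRingEnd ℂ) z) (e i), G 0 (e i)⟫ =
        ((((i : ℝ) ^ 2 + 1) ^ ((1 : ℝ) / 2) : ℝ) : ℂ) *
          ∑' m : ℕ, ((ν m i.natAbs : ℝ) : ℂ) ^ 2 /
            (((lamv m i.natAbs : ℂ) ^ 2) * ((lamv m i.natAbs : ℂ) ^ 2 + z)) := by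
      rw [← keyg.tsum_eq]
      rw [tsum_congr hterm, tsum_mul_left]
    rw [hmain, htsum, mul_assoc]
  · rw [if_neg hik]
    have hzero : (fun p : ℕ × ℤ =>
        ((((lamv p.1 p.2.natAbs : ℂ) ^ 2 + z)⁻¹ *
          (((((p.2 : ℝ) ^ 2 + 1) ^ ((1 : ℝ) / 4) * ν p.1 p.2.natAbs : ℝ) : ℂ))) * ⟪e i, e p.2⟫) *
        ((((lamv p.1 p.2.natAbs : ℂ) ^ 2)⁻¹ *
          (((((p.2 : ℝ) ^ 2 + 1) ^ ((1 : ℝ) / 4) * ν p.1 p.2.natAbs : ℝ) : ℂ))) * ⟪e p.2, e k⟫))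
        = fun _ => (0 : ℂ) := by
      funext p
      by_cases hpi : i = p.2
      · have : p.2 ≠ k := by rw [← hpi]; exact hik
        simp only [hee, if_neg this]
        ring
      · simp only [hee, if_neg hpi]
        ring
    have h0 : ⟪G ((starRingEnd ℂ) z) (e i), G 0 (e k)⟫ = 0 := by
      have := key2
      rw [hzero] at this
      exact (this.unique hasSum_zero)
    rw [hmain, h0, mul_zero]
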